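/- Let x > 0 and y ≠ 0 be real numbers. Then n^{x+1} · (1/(n^{x}·sqrt(1 + ((1−x)/y)²))) · | 1/sin(y·ln((n+1)/n)) − (1 + 1/n)^{−x} · ( 1/tan(y·ln((n+2)/(n+1))) + (x−1)/y ) | converges, as the natural number n → ∞, to (x² + y²)/(2·sqrt((1−x)² + y²)); equivalently, writing z = x + i·y, the limit equals |z|²/(2·|1−z|). -/

import Mathlib

open Filter Real Topology

namespace AbsDeltaAux

lemma ev_small (δ : ℝ) (hδ : 0 < δ) :
    ∀ᶠ s : ℝ in 𝓝[≠] (0:ℝ), |s| < δ ∧ s ≠ 0 := by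
  have h1 : ∀ᶠ s : ℝ in 𝓝 (0:ℝ), |s| < δ := by
    simpa using eventually_abs_sub_lt (0:ℝ) hδ
  filter_upwards [eventually_mem_nhdsWithin, eventually_nhdsWithin_of_eventually_nhds h1]
    with s hs h2
  exact ⟨h2, hs⟩

lemma lim_sin_div : Tendsto (fun s : ℝ => Real.sin s / s) (𝓝[≠] (0:ℝ)) (𝓝 1) := by
  have h := Real.hasDerivAt_sin 0
  rw [hasDerivAt_iff_tendsto_slope, Real.cos_zero] at h
  refine h.congr fun s => ?_
  simp [slope_fun_def, div_eq_inv_mul]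

lemma lim_div_sin : Tendsto (fun s : ℝ => s / Real.sin s) (𝓝[≠] (0:ℝ)) (𝓝 1) := by
  have h := lim_sin_div.inv₀ one_ne_zero
  simp only [inv_div, inv_one] at h
  exact h

lemma lim_log_div : Tendsto (fun t : ℝ => Real.log (1+t) / t) (𝓝[≠] (0:ℝ)) (𝓝 1) := by
  have h : HasDerivAt (fun t : ℝ => Real.log (1+t)) 1 0 := by
    have h1 : HasDerivAt (fun t : ℝ => 1 + t) 1 0 := by
      simpa using (hasDerivAt_id (0:ℝ)).const_add 1
    have h2 := (Real.hasDerivAt_log (by norm_num : ((1:ℝ)+0) ≠ 0)).comp 0 h1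
    exact h2.congr_deriv (by norm_num)
  rw [hasDerivAt_iff_tendsto_slope] at h
  refine h.congr fun t => ?_
  simp [slope_fun_def, div_eq_inv_mul]

lemma lim_A : Tendsto (fun s : ℝ => (s - Real.sin s)/s^3) (𝓝[≠] (0:ℝ)) (𝓝 (1/6)) := by
  have h : Tendsto (fun s : ℝ => (s - Real.sin s)/s^3 - 1/6) (𝓝[≠] (0:ℝ)) (𝓝 0) := by
    apply squeeze_zero_norm' (a := fun s : ℝ => |s| * (5/96)) (t₀ := 𝓝[≠] (0:ℝ))
    · filter_upwards [ev_small 1 one_pos] with s hs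
      obtain ⟨h1, h0⟩ := hs
      have hs3 : (0:ℝ) < |s|^3 := by positivity
      have key : (s - Real.sin s)/s^3 - 1/6 = ((s - s^3/6) - Real.sin s)/s^3 := by
        field_simp
        ring
      rw [Real.norm_eq_abs, key, abs_div, abs_pow, div_le_iff₀ hs3]
      have hb := Real.sin_bound (le_of_lt h1)
      rw [abs_sub_comm] at hb
      calc |s - s^3/6 - Real.sin s| ≤ |s|^4 * (5/96) := le_trans hb (by nlinarith [mul_nonneg (pow_nonneg (abs_nonneg s) 4) (sub_nonneg.mpr h1.le)])
        _ = |s| * (5/96) * |s|^3 := by ring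
    · have : Tendsto (fun s : ℝ => |s| * (5/96)) (𝓝[≠] (0:ℝ)) (𝓝 (|(0:ℝ)| * (5/96))) :=
        ((continuous_abs.tendsto 0).mono_left nhdsWithin_le_nhds).mul_const _
      simpa using this
  have h2 := h.add (tendsto_const_nhds (x := (1/6:ℝ)) (f := 𝓝[≠] (0:ℝ)))
  simpa using h2

lemma lim_B : Tendsto (fun s : ℝ => (Real.cos s - 1)/s^2) (𝓝[≠] (0:ℝ)) (𝓝 (-(1/2))) := by
  have h : Tendsto (fun s : ℝ => (Real.cos s - 1)/s^2 + 1/2) (𝓝[≠] (0:ℝ)) (𝓝 0) := by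
    apply squeeze_zero_norm' (a := fun s : ℝ => |s|^2 * (5/96)) (t₀ := 𝓝[≠] (0:ℝ))
    · filter_upwards [ev_small 1 one_pos] with s hs
      obtain ⟨h1, h0⟩ := hs
      have hs2 : (0:ℝ) < |s|^2 := by positivity
      have key : (Real.cos s - 1)/s^2 + 1/2 = (Real.cos s - (1 - s^2/2))/s^2 := by
        field_simp
        ring
      rw [Real.norm_eq_abs, key, abs_div, abs_pow, div_le_iff₀ hs2]
      calc |Real.cos s - (1 - s^2/2)| ≤ |s|^4 * (5/96) := Real.cos_bound (le_of_lt h1)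
        _ = |s|^2 * (5/96) * |s|^2 := by ring
    · have : Tendsto (fun s : ℝ => |s|^2 * (5/96)) (𝓝[≠] (0:ℝ)) (𝓝 (|(0:ℝ)|^2 * (5/96))) :=
        ((((continuous_abs.tendsto 0).mono_left nhdsWithin_le_nhds)).pow 2).mul_const _
      simpa using this
  have h2 := h.sub (tendsto_const_nhds (x := (1/2:ℝ)) (f := 𝓝[≠] (0:ℝ)))
  simpa using h2

lemma lim_cot : Tendsto (fun s : ℝ => (s * Real.cos s - Real.sin s)/s^3)
    (𝓝[≠] (0:ℝ)) (𝓝 (-(1/3))) := by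
  have h := lim_B.add lim_A
  rw [show -(1/2) + 1/6 = -((1:ℝ)/3) from by norm_num] at h
  refine Tendsto.congr' ?_ h
  filter_upwards [ev_small 1 one_pos] with s hs
  obtain ⟨-, h0⟩ := hs
  field_simp
  ring

lemma lim_logE : Tendsto (fun t : ℝ => (Real.log (1+t) - t + t^2/2 - t^3/3)/t^3)
    (𝓝[≠] (0:ℝ)) (𝓝 0) := by
  apply squeeze_zero_norm' (a := fun t : ℝ => 2 * |t|) (t₀ := 𝓝[≠] (0:ℝ))
  · filter_upwards [ev_small (1/2) (by norm_num)] with t ht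
    obtain ⟨h1, h0⟩ := ht
    have ht3 : (0:ℝ) < |t|^3 := by positivity
    have hb := abs_log_sub_add_sum_range_le (x := -t) (by rw [abs_neg]; linarith) 3
    have hsum : (∑ i ∈ Finset.range 3, (-t) ^ (i + 1) / ((i:ℝ) + 1)) = -t + t^2/2 - t^3/3 := by
      simp [Finset.sum_range_succ]
      ring
    rw [hsum] at hb
    have hb2 : |Real.log (1+t) - t + t^2/2 - t^3/3| ≤ |t|^4 / (1 - |t|) := by
      have : (1:ℝ) - -t = 1 + t := by ring
      rw [this] at hb
      calc |Real.log (1+t) - t + t^2/2 - t^3/3|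
          = |(-t + t^2/2 - t^3/3) + Real.log (1+t)| := by
            rw [show Real.log (1+t) - t + t^2/2 - t^3/3
              = (-t + t^2/2 - t^3/3) + Real.log (1+t) from by ring]
        _ ≤ |-t|^4 / (1 - |-t|) := hb
        _ = |t|^4 / (1 - |t|) := by rw [abs_neg]
    have hb3 : |t|^4 / (1 - |t|) ≤ 2 * |t|^4 := by
      rw [div_le_iff₀ (by linarith)]
      nlinarith [abs_nonneg t, pow_nonneg (abs_nonneg t) 4]
    rw [Real.norm_eq_abs, abs_div, abs_pow, div_le_iff₀ ht3]
    calc |Real.log (1+t) - t + t^2/2 - t^3/3| ≤ 2 * |t|^4 := le_trans hb2 hb3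
      _ = 2 * |t| * |t|^3 := by ring
  · have : Tendsto (fun t : ℝ => 2 * |t|) (𝓝[≠] (0:ℝ)) (𝓝 (2 * |(0:ℝ)|)) :=
      ((continuous_abs.tendsto 0).mono_left nhdsWithin_le_nhds).const_mul 2
    simpa using this

lemma lim_div_log : Tendsto (fun t : ℝ => t / Real.log (1+t)) (𝓝[≠] (0:ℝ)) (𝓝 1) := by
  have h := lim_log_div.inv₀ one_ne_zero
  simp only [inv_div, inv_one] at h
  exact h

lemma ev_log_ne : ∀ᶠ t : ℝ in 𝓝[≠] (0:ℝ), Real.log (1+t) ≠ 0 := by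
  filter_upwards [ev_small (1/2) (by norm_num)] with t ht
  obtain ⟨h1, h0⟩ := ht
  have h1' : -(1/2) < t ∧ t < 1/2 := abs_lt.mp h1
  intro hc
  have h2 : (1:ℝ)+t ≠ 1 := by intro hh; apply h0; linarith [hh]
  exact h2 (by
    have := Real.exp_log (show (0:ℝ) < 1+t by linarith [h1'.1])
    rw [hc, Real.exp_zero] at this
    linarith [this])

lemma lim_q : Tendsto (fun s : ℝ => (1/Real.log (1+s) - 1/s - 1/2)/s)
    (𝓝[≠] (0:ℝ)) (𝓝 (-(1/12))) := by
  have hε := lim_logE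
  have hdl := lim_div_log
  have ht0 : Tendsto (fun s : ℝ => s) (𝓝[≠] (0:ℝ)) (𝓝 0) :=
    tendsto_id.mono_left nhdsWithin_le_nhds
  have h : Tendsto (fun s : ℝ =>
      (-1 - 2*s - (12 + 6*s) * ((Real.log (1+s) - s + s^2/2 - s^3/3)/s^3))
        * (s / Real.log (1+s)) / 12)
      (𝓝[≠] (0:ℝ)) (𝓝 ((-1 - 2*0 - (12 + 6*0) * 0) * 1 / 12)) := by
    exact ((((tendsto_const_nhds.sub (ht0.const_mul 2)).sub
      (((tendsto_const_nhds.add (ht0.const_mul 6)).mul hε))).mul hdl).div_const 12)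
  rw [show (-1 - 2*(0:ℝ) - (12 + 6*0) * 0) * 1 / 12 = -(1/12) from by norm_num] at h
  refine Tendsto.congr' ?_ h
  filter_upwards [ev_small (1/2) (by norm_num), ev_log_ne] with s hs hL
  obtain ⟨-, h0⟩ := hs
  field_simp
  ring

lemma lim_p (x : ℝ) : Tendsto (fun t : ℝ => (1+t) ^ (-x)) (𝓝[>] (0:ℝ)) (𝓝 1) := by
  have hc : ContinuousAt (fun t : ℝ => (1+t) ^ (-x)) 0 := by
    apply ContinuousAt.rpow_const
    · exact (continuous_const.add continuous_id).continuousAt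
    · left; norm_num
  have h2 : Tendsto (fun t : ℝ => (1+t) ^ (-x)) (𝓝[>] (0:ℝ)) (𝓝 (((1:ℝ)+0) ^ (-x))) :=
    hc.tendsto.mono_left nhdsWithin_le_nhds
  simpa using h2

lemma lim_L1 : Tendsto (fun t : ℝ => Real.log (1+t)) (𝓝 (0:ℝ)) (𝓝 0) := by
  have hc : ContinuousAt (fun t : ℝ => Real.log (1+t)) 0 := by
    apply ContinuousAt.comp (g := Real.log)
    · simpa using Real.continuousAt_log (by norm_num : ((1:ℝ)+0) ≠ 0)
    · exact (continuous_const.add continuous_id).continuousAt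
  simpa using hc.tendsto

lemma lim_r (x : ℝ) : Tendsto (fun t : ℝ => ((1+t) ^ (-x) - 1 + x*t)/t^2)
    (𝓝[>] (0:ℝ)) (𝓝 (x*(x+1)/2)) := by
  set u : ℝ → ℝ := fun t => -x * Real.log (1+t) with hu_def
  have hlel : (𝓝[>] (0:ℝ)) ≤ (𝓝[≠] (0:ℝ)) :=
    nhdsWithin_mono 0 (fun s hs => ne_of_gt hs)
  have hLdiv : Tendsto (fun t : ℝ => Real.log (1+t)/t) (𝓝[>] (0:ℝ)) (𝓝 1) :=
    lim_log_div.mono_left hlel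
  have ht0 : Tendsto (fun t : ℝ => t) (𝓝[>] (0:ℝ)) (𝓝 0) :=
    tendsto_id.mono_left nhdsWithin_le_nhds
  have htpos : ∀ᶠ t : ℝ in 𝓝[>] (0:ℝ), 0 < t := eventually_mem_nhdsWithin
  have hL0 : Tendsto (fun t : ℝ => Real.log (1+t)) (𝓝[>] (0:ℝ)) (𝓝 0) :=
    lim_L1.mono_left nhdsWithin_le_nhds
  have hu0 : Tendsto u (𝓝[>] (0:ℝ)) (𝓝 0) := by
    have h2 := hL0.const_mul (-x)
    rw [mul_zero] at h2
    exact h2.congr fun t => by simp [hu_def]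
  -- the exp remainder part
  have he3 : Tendsto (fun t : ℝ => (Real.exp (u t) - 1 - u t - (u t)^2/2)/t^2)
      (𝓝[>] (0:ℝ)) (𝓝 0) := by
    apply squeeze_zero_norm' (a := fun t : ℝ => (2/9) * |x * (Real.log (1+t)/t)|^3 * t)
    · have hus : ∀ᶠ t : ℝ in 𝓝[>] (0:ℝ), |u t| ≤ 1 := by
        have h1 : ∀ᶠ s : ℝ in 𝓝 (0:ℝ), |s| < 1 := by
          simpa using eventually_abs_sub_lt (0:ℝ) one_pos
        filter_upwards [hu0.eventually h1] with t ht using le_of_lt ht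
      filter_upwards [htpos, hus] with t ht hu1
      have hb := Real.exp_bound hu1 (n := 3) (by norm_num)
      have hsum : (∑ i ∈ Finset.range 3, (u t) ^ i / (Nat.factorial i : ℝ))
          = 1 + u t + (u t)^2/2 := by
        rw [Finset.sum_range_succ, Finset.sum_range_succ, Finset.sum_range_one]
        norm_num [Nat.factorial]
      rw [hsum] at hb
      have hb2 : |Real.exp (u t) - 1 - u t - (u t)^2/2| ≤ |u t|^3 * (2/9) := by
        calc |Real.exp (u t) - 1 - u t - (u t)^2/2|
            = |Real.exp (u t) - (1 + u t + (u t)^2/2)| := by ring_nf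
          _ ≤ |u t|^3 * ((Nat.succ 3 : ℝ) / ((Nat.factorial 3 : ℝ) * 3)) := hb
          _ = |u t|^3 * (2/9) := by norm_num [Nat.factorial]
      have ht2 : (0:ℝ) < t^2 := by positivity
      have habs : |x * (Real.log (1+t)/t)| = |u t| / t := by
        have h1 : |u t| = |x * Real.log (1+t)| := by
          simp [hu_def, neg_mul, abs_neg]
        rw [h1, show x * (Real.log (1+t)/t) = (x * Real.log (1+t))/t from by ring,
          abs_div, abs_of_pos ht]
      rw [Real.norm_eq_abs, abs_div, abs_of_pos ht2, habs, div_le_iff₀ ht2]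
      calc |Real.exp (u t) - 1 - u t - (u t)^2/2| ≤ |u t|^3 * (2/9) := hb2
        _ = 2/9 * (|u t|/t)^3 * t * t^2 := by
            field_simp
    · have : Tendsto (fun t : ℝ => (2/9) * |x * (Real.log (1+t)/t)|^3 * t)
          (𝓝[>] (0:ℝ)) (𝓝 ((2/9) * |x * 1|^3 * 0)) :=
        ((((hLdiv.const_mul x).abs.pow 3).const_mul (2/9)).mul ht0)
      simpa using this
  -- middle part
  have hmid : Tendsto (fun t : ℝ => (u t + x*t)/t^2) (𝓝[>] (0:ℝ)) (𝓝 (x/2)) := by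
    have hε : Tendsto (fun t : ℝ => (Real.log (1+t) - t + t^2/2 - t^3/3)/t^3)
        (𝓝[>] (0:ℝ)) (𝓝 0) := lim_logE.mono_left hlel
    have h : Tendsto (fun t : ℝ =>
        -x * ((Real.log (1+t) - t + t^2/2 - t^3/3)/t^3 * t - 1/2 + t/3))
        (𝓝[>] (0:ℝ)) (𝓝 (-x * ((0:ℝ) * 0 - 1/2 + 0/3))) :=
      (((hε.mul ht0).sub tendsto_const_nhds).add (ht0.div_const 3)).const_mul (-x)
    rw [show -x * ((0:ℝ) * 0 - 1/2 + 0/3) = x/2 from by ring] at h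
    refine Tendsto.congr' ?_ h
    filter_upwards [htpos] with t ht
    have h0 : t ≠ 0 := ne_of_gt ht
    simp only [hu_def]
    field_simp
    ring
  have hsq : Tendsto (fun t : ℝ => (u t)^2/(2*t^2)) (𝓝[>] (0:ℝ)) (𝓝 (x^2/2)) := by
    have h : Tendsto (fun t : ℝ => (x * (Real.log (1+t)/t))^2 / 2)
        (𝓝[>] (0:ℝ)) (𝓝 ((x*(1:ℝ))^2/2)) := ((hLdiv.const_mul x).pow 2).div_const 2
    rw [show ((x*(1:ℝ))^2/2) = x^2/2 from by ring] at h
    refine Tendsto.congr' ?_ h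
    filter_upwards [htpos] with t ht
    have h0 : t ≠ 0 := ne_of_gt ht
    simp only [hu_def]
    rw [show x * (Real.log (1+t)/t) = x * Real.log (1+t)/t from (mul_div_assoc _ _ _).symm,
      div_pow, div_div, neg_mul, neg_sq]
    congr 1
    ring
  have hsum := (he3.add hmid).add hsq
  rw [show ((0:ℝ) + x/2) + x^2/2 = x*(x+1)/2 from by ring] at hsum
  refine Tendsto.congr' ?_ hsum
  filter_upwards [htpos] with t ht
  have h0 : t ≠ 0 := ne_of_gt ht
  have hrpow : ((1:ℝ)+t) ^ (-x) = Real.exp (u t) := by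
    rw [Real.rpow_def_of_pos (by linarith : (0:ℝ) < 1+t)]
    congr 1
    simp only [hu_def]
    ring
  rw [hrpow]
  field_simp
  ring

lemma hlel' : (𝓝[>] (0:ℝ)) ≤ (𝓝[≠] (0:ℝ)) :=
  nhdsWithin_mono 0 (fun s hs => ne_of_gt hs)

lemma hu_m : Tendsto (fun t : ℝ => t/(1+t)) (𝓝[>] (0:ℝ)) (𝓝[≠] (0:ℝ)) := by
  rw [tendsto_nhdsWithin_iff]
  constructor
  · have hc : ContinuousAt (fun t : ℝ => t/(1+t)) 0 :=
      (continuous_id.continuousAt).div (continuous_const.add continuous_id).continuousAt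
        (by norm_num)
    have h2 : Tendsto (fun t : ℝ => t/(1+t)) (𝓝[>] (0:ℝ)) (𝓝 ((0:ℝ)/(1+0))) :=
      hc.tendsto.mono_left nhdsWithin_le_nhds
    simpa using h2
  · filter_upwards [eventually_mem_nhdsWithin] with t (ht : 0 < t)
    have : 0 < t/(1+t) := by positivity
    exact ne_of_gt this

lemma ev_upos : ∀ᶠ t : ℝ in 𝓝[>] (0:ℝ), 0 < t/(1+t) := by
  filter_upwards [eventually_mem_nhdsWithin] with t (ht : 0 < t)
  positivity

lemma ev_L1pos : ∀ᶠ t : ℝ in 𝓝[>] (0:ℝ), 0 < Real.log (1+t) := by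
  filter_upwards [eventually_mem_nhdsWithin] with t (ht : 0 < t)
  exact Real.log_pos (by linarith)

lemma ev_L2pos : ∀ᶠ t : ℝ in 𝓝[>] (0:ℝ), 0 < Real.log (1+t/(1+t)) := by
  filter_upwards [ev_upos] with t ht
  exact Real.log_pos (by linarith)

lemma lim_M (x : ℝ) : Tendsto (fun t : ℝ =>
    (1/Real.log (1+t) - (1+t) ^ (-x)/Real.log (1+t/(1+t)) - (1+t) ^ (-x)*(x-1))/t)
    (𝓝[>] (0:ℝ)) (𝓝 (x^2/2)) := by
  have hQ1 : Tendsto (fun t : ℝ => (1/Real.log (1+t) - 1/t - 1/2)/t)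
      (𝓝[>] (0:ℝ)) (𝓝 (-(1/12))) := lim_q.mono_left hlel'
  have hQ2 : Tendsto (fun t : ℝ =>
      (1/Real.log (1+t/(1+t)) - 1/(t/(1+t)) - 1/2)/(t/(1+t)))
      (𝓝[>] (0:ℝ)) (𝓝 (-(1/12))) := lim_q.comp hu_m
  have hR := lim_r x
  have ht0 : Tendsto (fun t : ℝ => t) (𝓝[>] (0:ℝ)) (𝓝 0) :=
    tendsto_id.mono_left nhdsWithin_le_nhds
  have htpos : ∀ᶠ t : ℝ in 𝓝[>] (0:ℝ), 0 < t := eventually_mem_nhdsWithin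
  have hut : Tendsto (fun t : ℝ => (t/(1+t))/t) (𝓝[>] (0:ℝ)) (𝓝 1) := by
    have hc : ContinuousAt (fun t : ℝ => 1/(1+t)) 0 :=
      (continuous_const.continuousAt).div (continuous_const.add continuous_id).continuousAt
        (by norm_num)
    have h2 : Tendsto (fun t : ℝ => 1/(1+t)) (𝓝[>] (0:ℝ)) (𝓝 (1/(1+0))) :=
      hc.tendsto.mono_left nhdsWithin_le_nhds
    rw [show (1:ℝ)/(1+0) = 1 from by norm_num] at h2
    refine Tendsto.congr' ?_ h2
    filter_upwards [htpos] with t ht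
    have h0 : t ≠ 0 := ne_of_gt ht
    field_simp
  have hu0 : Tendsto (fun t : ℝ => t/(1+t)) (𝓝[>] (0:ℝ)) (𝓝 0) :=
    hu_m.mono_right nhdsWithin_le_nhds
  -- RHS expression
  have hRHS : Tendsto (fun t : ℝ =>
      (1/Real.log (1+t) - 1/t - 1/2)/t
      - ((t/(1+t))/t) * ((1/Real.log (1+t/(1+t)) - 1/(t/(1+t)) - 1/2)/(t/(1+t)))
      + x * (t/(1+t)) * ((1/Real.log (1+t/(1+t)) - 1/(t/(1+t)) - 1/2)/(t/(1+t)))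
      + ((3/2)*x + x*(x-1))
      - ((1+t) ^ (-x) - 1 + x*t)/t^2
      - t * (((1+t) ^ (-x) - 1 + x*t)/t^2)
          * (3/2 + (t/(1+t)) * ((1/Real.log (1+t/(1+t)) - 1/(t/(1+t)) - 1/2)/(t/(1+t))) + x - 1))
      (𝓝[>] (0:ℝ)) (𝓝 (
      -(1/12) - 1 * (-(1/12)) + x * 0 * (-(1/12)) + ((3/2)*x + x*(x-1)) - x*(x+1)/2
      - 0 * (x*(x+1)/2) * (3/2 + 0 * (-(1/12)) + x - 1))) := by
    have e1 := hut.mul hQ2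
    have e2 := (hu0.const_mul x).mul hQ2
    have e3 := ht0.mul hR
    have e4 := hu0.mul hQ2
    exact ((((hQ1.sub e1).add e2).add tendsto_const_nhds).sub hR).sub
      (e3.mul (((tendsto_const_nhds.add e4).add tendsto_const_nhds).sub tendsto_const_nhds))
  rw [show -(1/12) - 1 * (-(1/12)) + x * 0 * (-(1/12)) + ((3/2)*x + x*(x-1)) - x*(x+1)/2
      - 0 * (x*(x+1)/2) * (3/2 + 0 * (-(1/12)) + x - 1) = x^2/2 from by ring] at hRHS
  refine Tendsto.congr' ?_ hRHS
  filter_upwards [htpos, ev_L1pos, ev_L2pos] with t ht hL1 hL2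
  have h0 : t ≠ 0 := ne_of_gt ht
  have h1t : (1:ℝ) + t ≠ 0 := by linarith
  have hL1' : Real.log (1+t) ≠ 0 := ne_of_gt hL1
  have hL2' : Real.log (1+t/(1+t)) ≠ 0 := ne_of_gt hL2
  field_simp
  ring

lemma lim_main (x y : ℝ) (hx : 0 < x) (hy : y ≠ 0) : Tendsto (fun t : ℝ =>
    (1/Real.sin (y * Real.log (1+t)) - (1+t) ^ (-x) *
      (Real.cos (y * Real.log (1+t/(1+t)))/Real.sin (y * Real.log (1+t/(1+t))) + (x-1)/y))/t)
    (𝓝[>] (0:ℝ)) (𝓝 ((x^2+y^2)/(2*y))) := by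
  have htpos : ∀ᶠ t : ℝ in 𝓝[>] (0:ℝ), 0 < t := eventually_mem_nhdsWithin
  have ht0 : Tendsto (fun t : ℝ => t) (𝓝[>] (0:ℝ)) (𝓝 0) :=
    tendsto_id.mono_left nhdsWithin_le_nhds
  have hLdiv : Tendsto (fun t : ℝ => Real.log (1+t)/t) (𝓝[>] (0:ℝ)) (𝓝 1) :=
    lim_log_div.mono_left hlel'
  have hL2div : Tendsto (fun t : ℝ => Real.log (1+t/(1+t))/(t/(1+t))) (𝓝[>] (0:ℝ)) (𝓝 1) :=
    lim_log_div.comp hu_m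
  have hut : Tendsto (fun t : ℝ => (t/(1+t))/t) (𝓝[>] (0:ℝ)) (𝓝 1) := by
    have hc : ContinuousAt (fun t : ℝ => 1/(1+t)) 0 :=
      (continuous_const.continuousAt).div (continuous_const.add continuous_id).continuousAt
        (by norm_num)
    have h2 : Tendsto (fun t : ℝ => 1/(1+t)) (𝓝[>] (0:ℝ)) (𝓝 ((1:ℝ)/(1+0))) :=
      hc.tendsto.mono_left nhdsWithin_le_nhds
    rw [show (1:ℝ)/(1+0) = 1 from by norm_num] at h2
    refine Tendsto.congr' ?_ h2
    filter_upwards [htpos] with t ht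
    have h0 : t ≠ 0 := ne_of_gt ht
    field_simp
  -- s1, s2 tendsto within ≠ 0
  have hs1m : Tendsto (fun t : ℝ => y * Real.log (1+t)) (𝓝[>] (0:ℝ)) (𝓝[≠] (0:ℝ)) := by
    rw [tendsto_nhdsWithin_iff]
    constructor
    · have := (lim_L1.mono_left nhdsWithin_le_nhds :
        Tendsto (fun t : ℝ => Real.log (1+t)) (𝓝[>] (0:ℝ)) (𝓝 0)).const_mul y
      simpa using this
    · filter_upwards [ev_L1pos] with t ht
      exact mul_ne_zero hy (ne_of_gt ht)
  have hs2m : Tendsto (fun t : ℝ => y * Real.log (1+t/(1+t))) (𝓝[>] (0:ℝ)) (𝓝[≠] (0:ℝ)) := by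
    rw [tendsto_nhdsWithin_iff]
    constructor
    · have hu0' : Tendsto (fun t : ℝ => t/(1+t)) (𝓝[>] (0:ℝ)) (𝓝 (0:ℝ)) :=
        hu_m.mono_right nhdsWithin_le_nhds
      have h2 : Tendsto (fun t : ℝ => Real.log (1+t/(1+t))) (𝓝[>] (0:ℝ)) (𝓝 0) :=
        lim_L1.comp hu0'
      have := h2.const_mul y
      simpa using this
    · filter_upwards [ev_L2pos] with t ht
      exact mul_ne_zero hy (ne_of_gt ht)
  -- eventual nonvanishing of sines
  have hsin1 : ∀ᶠ t : ℝ in 𝓝[>] (0:ℝ), Real.sin (y * Real.log (1+t)) ≠ 0 := by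
    have hev : ∀ᶠ s : ℝ in 𝓝[≠] (0:ℝ), Real.sin s ≠ 0 := by
      filter_upwards [ev_small Real.pi Real.pi_pos] with s hs
      obtain ⟨h1, h0⟩ := hs
      have := abs_lt.mp h1
      rw [ne_eq, Real.sin_eq_zero_iff_of_lt_of_lt this.1 this.2]
      exact h0
    exact hs1m.eventually hev
  have hsin2 : ∀ᶠ t : ℝ in 𝓝[>] (0:ℝ), Real.sin (y * Real.log (1+t/(1+t))) ≠ 0 := by
    have hev : ∀ᶠ s : ℝ in 𝓝[≠] (0:ℝ), Real.sin s ≠ 0 := by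
      filter_upwards [ev_small Real.pi Real.pi_pos] with s hs
      obtain ⟨h1, h0⟩ := hs
      have := abs_lt.mp h1
      rw [ne_eq, Real.sin_eq_zero_iff_of_lt_of_lt this.1 this.2]
      exact h0
    exact hs2m.eventually hev
  -- T1
  have hT1 : Tendsto (fun t : ℝ =>
      (1/Real.sin (y * Real.log (1+t)) - 1/(y * Real.log (1+t)))/t)
      (𝓝[>] (0:ℝ)) (𝓝 (y/6)) := by
    have hprod : Tendsto (fun t : ℝ =>
        ((y * Real.log (1+t)) - Real.sin (y * Real.log (1+t)))/(y * Real.log (1+t))^3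
        * ((y * Real.log (1+t))/Real.sin (y * Real.log (1+t)))
        * (y * (Real.log (1+t)/t)))
        (𝓝[>] (0:ℝ)) (𝓝 (1/6 * 1 * (y * 1))) :=
      ((lim_A.comp hs1m).mul (lim_div_sin.comp hs1m)).mul (hLdiv.const_mul y)
    rw [show (1:ℝ)/6 * 1 * (y * 1) = y/6 from by ring] at hprod
    refine Tendsto.congr' ?_ hprod
    filter_upwards [htpos, ev_L1pos, hsin1] with t ht hL1 hs1
    have h0 : t ≠ 0 := ne_of_gt ht
    have hyL : y * Real.log (1+t) ≠ 0 := mul_ne_zero hy (ne_of_gt hL1)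
    field_simp
  -- T3 inner
  have hT3 : Tendsto (fun t : ℝ =>
      -((1+t) ^ (-x)) * ((Real.cos (y * Real.log (1+t/(1+t)))/Real.sin (y * Real.log (1+t/(1+t)))
        - 1/(y * Real.log (1+t/(1+t))))/t))
      (𝓝[>] (0:ℝ)) (𝓝 (y/3)) := by
    have hinner : Tendsto (fun t : ℝ =>
        ((y * Real.log (1+t/(1+t))) * Real.cos (y * Real.log (1+t/(1+t)))
          - Real.sin (y * Real.log (1+t/(1+t))))/(y * Real.log (1+t/(1+t)))^3
        * ((y * Real.log (1+t/(1+t)))/Real.sin (y * Real.log (1+t/(1+t))))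
        * (y * ((Real.log (1+t/(1+t))/(t/(1+t))) * ((t/(1+t))/t))))
        (𝓝[>] (0:ℝ)) (𝓝 (-(1/3) * 1 * (y * (1 * 1)))) :=
      ((lim_cot.comp hs2m).mul (lim_div_sin.comp hs2m)).mul ((hL2div.mul hut).const_mul y)
    have hfull := (lim_p x).neg.mul hinner
    rw [show -(1:ℝ) * (-(1/3) * 1 * (y * (1 * 1))) = y/3 from by ring] at hfull
    refine Tendsto.congr' ?_ hfull
    filter_upwards [htpos, ev_L2pos, hsin2, ev_upos] with t ht hL2 hs2 hu
    have h0 : t ≠ 0 := ne_of_gt ht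
    set L2 := Real.log (1+t/(1+t)) with hL2def
    set u := t/(1+t) with hudef
    have hu0 : u ≠ 0 := ne_of_gt hu
    have hyL : y * L2 ≠ 0 := mul_ne_zero hy (ne_of_gt hL2)
    field_simp
  -- T2
  have hT2 : Tendsto (fun t : ℝ =>
      (1/(y * Real.log (1+t)) - (1+t) ^ (-x) * (1/(y * Real.log (1+t/(1+t))) + (x-1)/y))/t)
      (𝓝[>] (0:ℝ)) (𝓝 (x^2/(2*y))) := by
    have hM := (lim_M x).const_mul (1/y)
    rw [show (1:ℝ)/y * (x^2/2) = x^2/(2*y) from by field_simp] at hM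
    refine Tendsto.congr' ?_ hM
    filter_upwards [htpos, ev_L1pos, ev_L2pos] with t ht hL1 hL2
    have h0 : t ≠ 0 := ne_of_gt ht
    set L2 := Real.log (1+t/(1+t)) with hL2def
    have hL1' : Real.log (1+t) ≠ 0 := ne_of_gt hL1
    have hL2' : L2 ≠ 0 := ne_of_gt hL2
    field_simp
    ring
  -- combine
  have hsum := (hT1.add hT2).add hT3
  rw [show y/6 + x^2/(2*y) + y/3 = (x^2+y^2)/(2*y) from by field_simp; ring] at hsum
  refine hsum.congr fun t => ?_
  ring

end AbsDeltaAux


open AbsDeltaAux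


/-- Asymptotic expansion of `|δ_n(z)|` for `z = x + i·y`, `x > 0`, `y ≠ 0`:
`n^{x+1} · (1/(n^x·√(1+((1−x)/y)²))) · |1/sin(y·ln((n+1)/n)) − (1+1/n)^{−x}·(1/tan(y·ln((n+2)/(n+1))) + (x−1)/y)|`
converges to `(x² + y²)/(2·√((1−x)² + y²)) = |z|²/(2·|1−z|)`. -/
theorem abs_delta_asymptotic (x y : ℝ) (hx : 0 < x) (hy : y ≠ 0) :
    Tendsto (fun n : ℕ =>
      (n : ℝ) ^ (x + 1) *
        (1 / ((n : ℝ) ^ x * Real.sqrt (1 + ((1 - x) / y) ^ 2)) *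
          |1 / Real.sin (y * Real.log (((n : ℝ) + 1) / (n : ℝ))) -
            (1 + 1 / (n : ℝ)) ^ (-x) *
              (1 / Real.tan (y * Real.log (((n : ℝ) + 2) / ((n : ℝ) + 1))) +
                (x - 1) / y)|))
      atTop (nhds ((x ^ 2 + y ^ 2) / (2 * Real.sqrt ((1 - x) ^ 2 + y ^ 2)))) := by
  have hy2 : (0:ℝ) < y^2 := by positivity
  have hSpos : (0:ℝ) < (1 - x)^2 + y^2 := by positivity
  have hS : (0:ℝ) < Real.sqrt ((1 - x)^2 + y^2) := Real.sqrt_pos.mpr hSpos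
  have hyabs : (0:ℝ) < |y| := abs_pos.mpr hy
  have hC : Real.sqrt (1 + ((1 - x)/y)^2) = Real.sqrt ((1 - x)^2 + y^2) / |y| := by
    rw [eq_div_iff (ne_of_gt hyabs), ← Real.sqrt_sq_eq_abs,
      ← Real.sqrt_mul (by positivity : (0:ℝ) ≤ 1 + ((1 - x)/y)^2)]
    congr 1
    field_simp
    ring
  have hCpos : (0:ℝ) < Real.sqrt (1 + ((1 - x)/y)^2) := Real.sqrt_pos.mpr (by positivity)
  -- sequence 1/n tends to 0 within Ioi 0
  have htn : Tendsto (fun n : ℕ => 1/(n:ℝ)) atTop (𝓝[>] (0:ℝ)) := by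
    rw [tendsto_nhdsWithin_iff]
    refine ⟨tendsto_one_div_atTop_nhds_zero_nat, ?_⟩
    filter_upwards [eventually_gt_atTop 0] with n hn
    have : (0:ℝ) < (n:ℝ) := by exact_mod_cast hn
    exact Set.mem_Ioi.mpr (by positivity)
  have h2 := ((lim_main x y hx hy).comp htn).abs
  have h3 := h2.const_mul (1 / Real.sqrt (1 + ((1 - x)/y)^2))
  have hval : (1 / Real.sqrt (1 + ((1 - x)/y)^2)) * |(x^2+y^2)/(2*y)|
      = (x^2 + y^2) / (2 * Real.sqrt ((1 - x)^2 + y^2)) := by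
    rw [hC, abs_div, abs_of_pos (show (0:ℝ) < x^2+y^2 by positivity),
      abs_mul, abs_two]
    field_simp
  rw [hval] at h3
  refine Tendsto.congr' ?_ h3
  filter_upwards [eventually_ge_atTop 1] with n hn
  have hN : (1:ℝ) ≤ (n:ℝ) := by exact_mod_cast hn
  have hN0 : (0:ℝ) < (n:ℝ) := by linarith
  have hNne : (n:ℝ) ≠ 0 := ne_of_gt hN0
  have hN1 : (0:ℝ) < 1 + 1/(n:ℝ) := by positivity
  -- rewrite log arguments
  have e1 : ((n:ℝ) + 1)/(n:ℝ) = 1 + 1/(n:ℝ) := by field_simp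
  have hN1' : (n:ℝ) + 1 ≠ 0 := by positivity
  have e2 : ((n:ℝ) + 2)/((n:ℝ) + 1) = 1 + (1/(n:ℝ))/(1 + 1/(n:ℝ)) := by
    rw [show 1 + (1/(n:ℝ))/(1 + 1/(n:ℝ)) = ((n:ℝ)+2)/((n:ℝ)+1) from by field_simp; ring]
  have e3 : (1:ℝ) / Real.tan (y * Real.log (1 + (1/(n:ℝ))/(1 + 1/(n:ℝ))))
      = Real.cos (y * Real.log (1 + (1/(n:ℝ))/(1 + 1/(n:ℝ))))
        / Real.sin (y * Real.log (1 + (1/(n:ℝ))/(1 + 1/(n:ℝ)))) := by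
    rw [Real.tan_eq_sin_div_cos, one_div_div]
  simp only [Function.comp_apply]
  rw [e1, e2, e3]
  -- now pure algebra
  have hrpow : (n:ℝ) ^ (x+1) = (n:ℝ) ^ x * (n:ℝ) := by
    rw [Real.rpow_add hN0, Real.rpow_one]
  have hrpos : (0:ℝ) < (n:ℝ) ^ x := Real.rpow_pos_of_pos hN0 x
  rw [hrpow]
  simp only [div_div_eq_mul_div, div_one]
  rw [abs_mul, abs_of_pos hN0]
  field_simp [hrpos.ne', hCpos.ne']
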